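/- arXiv:1309.4969 — 2 statements merged into one kernel-verified Lean document; each statement's English description precedes it below -/
import Mathlib

section
/- For each integer n ≥ 2 let u_n denote the number of tuples x = (x_1, …, x_{n−1}) of nonnegative integers satisfying (Ax)_i ≥ 0 for all 1 ≤ i ≤ n−1 (with x_0 = x_n = 0) and x_1 + x_{n−1} ≤ 3. Then for all n ≥ 2, u_n = (1/(n+3)) · Σ_{d | gcd(n,3)} φ(d) · C((n+3)/d, 3/d), where φ is the Euler totient function and C(·,·) is the binomial coefficient; explicitly, u_n = (n+2)(n+1)/6 if 3 does not divide n, and u_n = (n² + 3n + 6)/6 if 3 divides n. -/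
set_option maxHeartbeats 1000000

/-- `uCount n` is the number of nonnegative integer tuples `(x_1, …, x_{n-1})` with
`(Ax)_i ≥ 0` for all `1 ≤ i ≤ n-1` (with `x_0 = x_n = 0`) and `x_1 + x_{n-1} ≤ 3`,
i.e. the number of maximal dominant weights of the level-3 module `V(3Λ_0)`.
(Tuples are encoded as functions `ℕ → ℤ` vanishing at `0` and from `n` on.) -/
noncomputable def uCount (n : ℕ) : ℕ :=
  Set.ncard {x : ℕ → ℤ |
    (∀ i, i = 0 ∨ n ≤ i → x i = 0) ∧
    (∀ i, 1 ≤ i → i ≤ n - 1 → 0 ≤ x i) ∧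
    (∀ i, 1 ≤ i → i ≤ n - 1 → 0 ≤ -x (i - 1) + 2 * x i - x (i + 1)) ∧
    x 1 + x (n - 1) ≤ 3}

open Finset

def kOf (n : ℕ) (x : ℕ → ℤ) (v : ℤ) : ℕ :=
  ((range n).filter (fun j => v ≤ x (j+1) - x j)).card

def rf (n : ℕ) (x : ℕ → ℤ) : ℕ × ℕ × ℕ × ℕ :=
  (kOf n x 2, kOf n x 1, kOf n x 0, kOf n x (-1))

def gf (n : ℕ) (k : ℕ × ℕ × ℕ × ℕ) : ℕ → ℤ := fun i =>
  ((min i k.1 + min i k.2.1 + min i k.2.2.1 + min i k.2.2.2 : ℕ) : ℤ)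
    - 2 * ((min i n : ℕ) : ℤ)

def Tf (n : ℕ) : Finset (ℕ × ℕ × ℕ × ℕ) :=
  ((range (n+1)) ×ˢ (range (n+1)) ×ˢ (range (n+1)) ×ˢ (range (n+1))).filter
    (fun k => k.1 ≤ k.2.1 ∧ k.2.1 ≤ k.2.2.1 ∧ k.2.2.1 ≤ k.2.2.2 ∧ k.2.2.2 ≤ n ∧
      k.1 + k.2.1 + k.2.2.1 + k.2.2.2 = 2*n ∧ (k.1 = 0 ∨ k.2.2.2 = n))

lemma mem_Tf {n : ℕ} {k : ℕ × ℕ × ℕ × ℕ} :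
    k ∈ Tf n ↔ (k.1 ≤ k.2.1 ∧ k.2.1 ≤ k.2.2.1 ∧ k.2.2.1 ≤ k.2.2.2 ∧ k.2.2.2 ≤ n ∧
      k.1 + k.2.1 + k.2.2.1 + k.2.2.2 = 2*n ∧ (k.1 = 0 ∨ k.2.2.2 = n)) := by
  simp only [Tf, mem_filter, mem_product, mem_range]
  constructor
  · tauto
  · intro h; refine ⟨⟨?_, ?_, ?_, ?_⟩, h⟩ <;> omega

lemma sum_ind (i k : ℕ) :
    (∑ j ∈ range i, if j < k then (1:ℤ) else 0) = ((min i k : ℕ) : ℤ) := by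
  induction i with
  | zero => simp
  | succ m ih => rw [Finset.sum_range_succ, ih]; split_ifs <;> push_cast <;> omega

lemma filter_downclosed {n : ℕ} {s : Finset ℕ} (hs : s ⊆ range n)
    (hd : ∀ j, j + 1 ∈ s → j ∈ s) : ∀ j, j ∈ s ↔ j < s.card := by
  have key : ∀ m i, i + m ∈ s → i ∈ s := by
    intro m
    induction m with
    | zero => intro i h; simpa using h
    | succ m ih =>
      intro i h
      exact ih i (hd _ (by rw [show i + m + 1 = i + (m+1) by omega]; exact h))
  intro j
  constructor
  · intro hj
    have hsub : range (j+1) ⊆ s := by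
      intro i hi
      rw [mem_range] at hi
      exact key (j - i) i (by rw [show i + (j-i) = j by omega]; exact hj)
    have := Finset.card_le_card hsub
    simpa using this
  · intro hj
    by_contra hmem
    have hsub : s ⊆ range j := by
      intro m hm
      rw [mem_range]
      by_contra hle
      exact hmem (key (m - j) j (by rw [show j + (m-j) = m by omega]; exact hm))
    have := Finset.card_le_card hsub
    simp at this
    omega

lemma struct {n : ℕ} (hn : 2 ≤ n) (x : ℕ → ℤ)
    (h0 : ∀ i, i = 0 ∨ n ≤ i → x i = 0)
    (hpos : ∀ i, 1 ≤ i → i ≤ n - 1 → 0 ≤ x i)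
    (hconc : ∀ i, 1 ≤ i → i ≤ n - 1 → 0 ≤ -x (i - 1) + 2 * x i - x (i + 1))
    (hbd : x 1 + x (n - 1) ≤ 3) :
    (kOf n x 2 ≤ kOf n x 1 ∧ kOf n x 1 ≤ kOf n x 0 ∧ kOf n x 0 ≤ kOf n x (-1) ∧
      kOf n x (-1) ≤ n ∧ kOf n x 2 + kOf n x 1 + kOf n x 0 + kOf n x (-1) = 2*n ∧
      (kOf n x 2 = 0 ∨ kOf n x (-1) = n)) ∧
    (∀ i, x i = ((min i (kOf n x 2) + min i (kOf n x 1) + min i (kOf n x 0)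
        + min i (kOf n x (-1)) : ℕ) : ℤ) - 2 * ((min i n : ℕ) : ℤ)) := by
  set d : ℕ → ℤ := fun j => x (j+1) - x j with hd
  have hx0 : x 0 = 0 := h0 0 (Or.inl rfl)
  have hxn : ∀ i, n ≤ i → x i = 0 := fun i hi => h0 i (Or.inr hi)
  have tele : ∀ i, ∑ j ∈ range i, d j = x i := by
    intro i
    rw [Finset.sum_range_sub (f := x), hx0, sub_zero]
  have hmono1 : ∀ j, j + 1 ≤ n - 1 → d (j+1) ≤ d j := by
    intro j hj
    have := hconc (j+1) (by omega) (by omega)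
    simp only [hd, Nat.add_sub_cancel] at this ⊢
    omega
  have hmono : ∀ i j, i ≤ j → j ≤ n - 1 → d j ≤ d i := by
    intro i j hij hj
    induction j with
    | zero => have : i = 0 := by omega
              rw [this]
    | succ m ih =>
      rcases Nat.eq_or_lt_of_le hij with h | h
      · rw [h]
      · exact le_trans (hmono1 m hj) (ih (by omega) (by omega))
  have hd0 : d 0 = x 1 := by simp [hd, hx0]
  have hdn : d (n-1) = - x (n-1) := by
    simp only [hd]
    rw [show n - 1 + 1 = n by omega, hxn n le_rfl]
    ring
  have hsum0 : ∑ j ∈ range n, d j = 0 := by rw [tele, hxn n le_rfl]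
  have hx1nn : 0 ≤ x 1 := hpos 1 le_rfl (by omega)
  have hxn1nn : 0 ≤ x (n-1) := hpos (n-1) (by omega) le_rfl
  have hposd : x (n-1) = 0 → x 1 = 0 := by
    intro h
    have hge : ∀ j ∈ range n, 0 ≤ d j := by
      intro j hj
      rw [mem_range] at hj
      have := hmono j (n-1) (by omega) le_rfl
      rw [hdn, h] at this
      omega
    have := (Finset.sum_eq_zero_iff_of_nonneg hge).mp hsum0 0 (by rw [mem_range]; omega)
    rw [hd0] at this
    omega
  have hnegd : x 1 = 0 → x (n-1) = 0 := by
    intro h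
    have hge : ∀ j ∈ range n, d j ≤ 0 := by
      intro j hj
      rw [mem_range] at hj
      have := hmono 0 j (by omega) (by omega)
      rw [hd0, h] at this
      omega
    have := (Finset.sum_eq_zero_iff_of_nonpos hge).mp hsum0 (n-1) (by rw [mem_range]; omega)
    rw [hdn] at this
    omega
  have hx1le : x 1 ≤ 2 := by
    by_contra h
    have h1 : x (n-1) = 0 := by omega
    have := hposd h1
    omega
  have hxn1le : x (n-1) ≤ 2 := by
    by_contra h
    have h1 : x 1 = 0 := by omega
    have := hnegd h1
    omega
  have hdbound : ∀ j, j < n → -2 ≤ d j ∧ d j ≤ 2 := by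
    intro j hj
    constructor
    · have := hmono j (n-1) (by omega) le_rfl; rw [hdn] at this; omega
    · have := hmono 0 j (by omega) (by omega); rw [hd0] at this; omega
  -- prefix property
  have key : ∀ v : ℤ, ∀ j, j < n → (v ≤ d j ↔ j < kOf n x v) := by
    intro v
    have hdc : ∀ j, j + 1 ∈ (range n).filter (fun j => v ≤ x (j+1) - x j) →
        j ∈ (range n).filter (fun j => v ≤ x (j+1) - x j) := by
      intro j hj
      rw [mem_filter, mem_range] at hj ⊢
      have hm := hmono j (j+1) (by omega) (by omega)
      simp only [hd] at hm
      exact ⟨by omega, le_trans hj.2 hm⟩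
    have := filter_downclosed (filter_subset _ _) hdc
    intro j hj
    rw [kOf, ← this j, mem_filter, mem_range]
    simp only [hd]
    tauto
  have hkle : ∀ v : ℤ, kOf n x v ≤ n := by
    intro v
    exact le_trans (Finset.card_filter_le _ _) (by simp)
  have hdval : ∀ j, j < n → d j =
      (if j < kOf n x 2 then (1:ℤ) else 0) + (if j < kOf n x 1 then 1 else 0)
      + (if j < kOf n x 0 then 1 else 0) + (if j < kOf n x (-1) then 1 else 0) - 2 := by
    intro j hj
    have k2 := key 2 j hj
    have k1 := key 1 j hj
    have k0 := key 0 j hj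
    have km := key (-1) j hj
    have hb := hdbound j hj
    split_ifs <;> omega
  have hxval : ∀ i, i ≤ n → x i = ((min i (kOf n x 2) + min i (kOf n x 1) + min i (kOf n x 0)
        + min i (kOf n x (-1)) : ℕ) : ℤ) - 2 * (i : ℤ) := by
    intro i hi
    rw [← tele i, Finset.sum_congr rfl (fun j hj => hdval j (by rw [mem_range] at hj; omega))]
    push_cast
    rw [Finset.sum_sub_distrib, Finset.sum_add_distrib, Finset.sum_add_distrib,
      Finset.sum_add_distrib, sum_ind, sum_ind, sum_ind, sum_ind]
    push_cast
    simp [mul_comm]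
  have hsum2n : kOf n x 2 + kOf n x 1 + kOf n x 0 + kOf n x (-1) = 2 * n := by
    have := hxval n le_rfl
    rw [hxn n le_rfl] at this
    have m2 := hkle 2; have m1 := hkle 1; have m0 := hkle 0; have mm := hkle (-1)
    omega
  have hmono_k : ∀ v w : ℤ, v ≤ w → kOf n x w ≤ kOf n x v := by
    intro v w hvw
    apply Finset.card_le_card
    apply Finset.monotone_filter_right
    intro j hj
    omega
  have hlast : kOf n x 2 = 0 ∨ kOf n x (-1) = n := by
    by_contra h
    push_neg at h
    have e1 := hxval 1 (by omega)
    have e2 := hxval (n-1) (by omega)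
    have m2 := hkle 2; have m1 := hkle 1; have m0 := hkle 0; have mm := hkle (-1)
    have s21 := hmono_k 1 2 (by norm_num)
    have s10 := hmono_k 0 1 (by norm_num)
    have s0m := hmono_k (-1) 0 (by norm_num)
    omega
  refine ⟨⟨hmono_k 1 2 (by norm_num), hmono_k 0 1 (by norm_num), hmono_k (-1) 0 (by norm_num),
    hkle _, hsum2n, hlast⟩, ?_⟩
  intro i
  by_cases hi : i ≤ n
  · rw [hxval i hi, min_eq_left hi]
  · rw [hxn i (by omega), min_eq_right (by omega : n ≤ i),
      min_eq_right (le_trans (hkle _) (by omega)), min_eq_right (le_trans (hkle _) (by omega)),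
      min_eq_right (le_trans (hkle _) (by omega)), min_eq_right (le_trans (hkle _) (by omega))]
    push_cast
    omega

lemma gf_apply (n a b c d : ℕ) (i : ℕ) : gf n (a,b,c,d) i =
    ((min i a + min i b + min i c + min i d : ℕ) : ℤ) - 2 * ((min i n : ℕ) : ℤ) := rfl


lemma forwardS {n a b c d : ℕ} (hn : 2 ≤ n) (h1 : a ≤ b) (h2 : b ≤ c) (h3 : c ≤ d) (h4 : d ≤ n)
    (h5 : a + b + c + d = 2*n) (h6 : a = 0 ∨ d = n) :
    (∀ i, i = 0 ∨ n ≤ i → gf n (a,b,c,d) i = 0) ∧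
    (∀ i, 1 ≤ i → i ≤ n - 1 → 0 ≤ gf n (a,b,c,d) i) ∧
    (∀ i, 1 ≤ i → i ≤ n - 1 → 0 ≤ -gf n (a,b,c,d) (i - 1) + 2 * gf n (a,b,c,d) i
        - gf n (a,b,c,d) (i + 1)) ∧
    gf n (a,b,c,d) 1 + gf n (a,b,c,d) (n - 1) ≤ 3 := by
  refine ⟨?_, ?_, ?_, ?_⟩
  · rintro i (rfl | hi) <;> rw [gf_apply] <;> omega
  · intro i hi1 hi2; rw [gf_apply]; omega
  · intro i hi1 hi2
    obtain ⟨j, rfl⟩ : ∃ j, i = j + 1 := ⟨i - 1, by omega⟩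
    rw [gf_apply, gf_apply, gf_apply, Nat.add_sub_cancel,
      min_eq_left (show j ≤ n by omega), min_eq_left (show j+1 ≤ n by omega),
      min_eq_left (show j+2 ≤ n by omega)]
    omega
  · rw [gf_apply, gf_apply, min_eq_left (show 1 ≤ n by omega),
      min_eq_left (show n - 1 ≤ n by omega)]
    omega

lemma retract {n a b c d : ℕ} (hn : 2 ≤ n) (h1 : a ≤ b) (h2 : b ≤ c) (h3 : c ≤ d) (h4 : d ≤ n)
    (h5 : a + b + c + d = 2*n) :
    kOf n (gf n (a,b,c,d)) 2 = a ∧ kOf n (gf n (a,b,c,d)) 1 = b ∧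
    kOf n (gf n (a,b,c,d)) 0 = c ∧ kOf n (gf n (a,b,c,d)) (-1) = d := by
  have hdg : ∀ j, j < n → gf n (a,b,c,d) (j+1) - gf n (a,b,c,d) j =
      (if j < a then (1:ℤ) else 0) + (if j < b then 1 else 0)
      + (if j < c then 1 else 0) + (if j < d then 1 else 0) - 2 := by
    intro j hj
    rw [gf_apply, gf_apply, min_eq_left (show j ≤ n by omega),
      min_eq_left (show j+1 ≤ n by omega)]
    split_ifs <;> omega
  have main : ∀ (v : ℤ) (m : ℕ), m ≤ n →
      (∀ j, j < n → (v ≤ gf n (a,b,c,d) (j+1) - gf n (a,b,c,d) j ↔ j < m)) →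
      kOf n (gf n (a,b,c,d)) v = m := by
    intro v m hm hiff
    rw [kOf]
    have heq : (range n).filter (fun j => v ≤ gf n (a,b,c,d) (j+1) - gf n (a,b,c,d) j)
        = range m := by
      ext j
      simp only [mem_filter, mem_range]
      constructor
      · rintro ⟨hj, hv⟩; exact (hiff j hj).mp hv
      · intro hj; exact ⟨by omega, (hiff j (by omega)).mpr hj⟩
    rw [heq, card_range]
  refine ⟨main 2 a (by omega) ?_, main 1 b (by omega) ?_, main 0 c (by omega) ?_,
    main (-1) d (by omega) ?_⟩ <;>
    (intro j hj; rw [hdg j hj]; split_ifs <;> omega)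

lemma uCount_eq_cardTf {n : ℕ} (hn : 2 ≤ n) : uCount n = (Tf n).card := by
  classical
  have himg : {x : ℕ → ℤ |
      (∀ i, i = 0 ∨ n ≤ i → x i = 0) ∧
      (∀ i, 1 ≤ i → i ≤ n - 1 → 0 ≤ x i) ∧
      (∀ i, 1 ≤ i → i ≤ n - 1 → 0 ≤ -x (i - 1) + 2 * x i - x (i + 1)) ∧
      x 1 + x (n - 1) ≤ 3} = gf n '' (Tf n : Set (ℕ × ℕ × ℕ × ℕ)) := by
    ext x
    constructor
    · rintro ⟨c1, c2, c3, c4⟩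
      obtain ⟨hT, hval⟩ := struct hn x c1 c2 c3 c4
      refine ⟨rf n x, ?_, ?_⟩
      · rw [Finset.mem_coe, mem_Tf]; exact hT
      · funext i
        exact (hval i).symm
    · rintro ⟨⟨a, b, c, d⟩, hk, rfl⟩
      rw [Finset.mem_coe, mem_Tf] at hk
      obtain ⟨h1, h2, h3, h4, h5, h6⟩ := hk
      obtain ⟨c1, c2, c3, c4⟩ := forwardS hn h1 h2 h3 h4 h5 h6
      exact ⟨c1, c2, c3, c4⟩
  have hinj : Set.InjOn (gf n) (Tf n : Set (ℕ × ℕ × ℕ × ℕ)) := by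
    rintro ⟨a, b, c, d⟩ hk ⟨a', b', c', d'⟩ hk' he
    rw [Finset.mem_coe, mem_Tf] at hk hk'
    dsimp only at hk hk'
    obtain ⟨h1, h2, h3, h4, h5, h6⟩ := hk
    obtain ⟨h1', h2', h3', h4', h5', h6'⟩ := hk'
    obtain ⟨r1, r2, r3, r4⟩ := retract hn h1 h2 h3 h4 h5
    obtain ⟨r1', r2', r3', r4'⟩ := retract hn h1' h2' h3' h4' h5'
    rw [he] at r1 r2 r3 r4
    simp only [Prod.mk.injEq]
    omega
  rw [uCount, himg, Set.ncard_image_of_injOn hinj, Set.ncard_coe_finset]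

def Wf (n : ℕ) : Finset (ℕ × ℕ × ℕ) :=
  ((range 2) ×ˢ (range (n+1)) ×ˢ (range (n+1))).filter
    (fun t => 3*t.2.1 + 2*t.2.2 + 3*t.1 ≤ n)

lemma mem_Wf {n : ℕ} {t : ℕ × ℕ × ℕ} :
    t ∈ Wf n ↔ (t.1 < 2 ∧ 3*t.2.1 + 2*t.2.2 + 3*t.1 ≤ n) := by
  simp only [Wf, mem_filter, mem_product, mem_range]
  constructor
  · tauto
  · intro h; exact ⟨⟨h.1, by omega, by omega⟩, h.2⟩

lemma cardTf_eq_cardWf {n : ℕ} (hn : 2 ≤ n) : (Tf n).card = (Wf n).card := by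
  apply Finset.card_nbij'
    (i := fun k => if k.2.2.2 = n then (0, k.1, k.2.1 - k.1) else (1, n - 1 - k.2.2.2, k.2.2.2 - k.2.2.1))
    (j := fun t => if t.1 = 0 then (t.2.1, t.2.1 + t.2.2, n - 2*t.2.1 - t.2.2, n)
      else (0, 2*t.2.1 + t.2.2 + 2, n - 1 - t.2.1 - t.2.2, n - 1 - t.2.1))
  · rintro ⟨a, b, c, d⟩ hk
    rw [Finset.mem_coe, mem_Tf] at hk
    dsimp only at hk ⊢
    obtain ⟨h1, h2, h3, h4, h5, h6⟩ := hk
    by_cases hd : d = n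
    · rw [if_pos hd]; rw [Finset.mem_coe, mem_Wf]; dsimp only; omega
    · rw [if_neg hd]; rw [Finset.mem_coe, mem_Wf]; dsimp only; omega
  · rintro ⟨e, i, j⟩ ht
    rw [Finset.mem_coe, mem_Wf] at ht
    dsimp only at ht ⊢
    obtain ⟨he, hle⟩ := ht
    by_cases he0 : e = 0
    · rw [if_pos he0]; rw [Finset.mem_coe, mem_Tf]; dsimp only; omega
    · rw [if_neg he0]; rw [Finset.mem_coe, mem_Tf]; dsimp only; omega
  · rintro ⟨a, b, c, d⟩ hk
    rw [Finset.mem_coe, mem_Tf] at hk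
    dsimp only at hk
    obtain ⟨h1, h2, h3, h4, h5, h6⟩ := hk
    by_cases hd : d = n
    · dsimp only; rw [if_pos hd]
      dsimp only
      rw [if_pos rfl]
      simp only [Prod.mk.injEq, true_and, and_true]
      omega
    · dsimp only; rw [if_neg hd]
      dsimp only
      rw [if_neg (by omega)]
      simp only [Prod.mk.injEq, true_and, and_true]
      omega
  · rintro ⟨e, i, j⟩ ht
    rw [Finset.mem_coe, mem_Wf] at ht
    dsimp only at ht
    obtain ⟨he, hle⟩ := ht
    by_cases he0 : e = 0
    · dsimp only; rw [if_pos he0]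
      dsimp only
      rw [if_pos rfl]
      simp only [Prod.mk.injEq, true_and, and_true]
      omega
    · dsimp only; rw [if_neg he0]
      dsimp only
      rw [if_neg (by omega)]
      simp only [Prod.mk.injEq, true_and, and_true]
      omega

lemma wfRec (n : ℕ) (hn : 1 ≤ n) :
    (Wf (n+2)).card = (Wf n).card + ((n+2)/3 + (n-1)/3 + 2) := by
  classical
  have hsplit := Finset.card_filter_add_card_filter_not
    (s := Wf (n+2)) (p := fun t => t.2.2 = 0)
  have h1 : ((Wf (n+2)).filter (fun t => ¬ t.2.2 = 0)).card = (Wf n).card := by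
    apply Finset.card_nbij' (i := fun t => (t.1, t.2.1, t.2.2 - 1))
      (j := fun t => (t.1, t.2.1, t.2.2 + 1))
    · rintro ⟨e, i, j⟩ ht
      rw [Finset.mem_coe, mem_filter, mem_Wf] at ht
      rw [Finset.mem_coe, mem_Wf]
      dsimp only at ht ⊢
      omega
    · rintro ⟨e, i, j⟩ ht
      rw [Finset.mem_coe, mem_Wf] at ht
      rw [Finset.mem_coe, mem_filter, mem_Wf]
      dsimp only at ht ⊢
      omega
    · rintro ⟨e, i, j⟩ ht
      rw [Finset.mem_coe, mem_filter, mem_Wf] at ht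
      dsimp only at ht ⊢
      simp only [Prod.mk.injEq, true_and, and_true]
      omega
    · rintro ⟨e, i, j⟩ ht
      simp only [Prod.mk.injEq, true_and, and_true]
      omega
  have h2 : ((Wf (n+2)).filter (fun t => t.2.2 = 0)).card
      = (n+2)/3 + 1 + ((n-1)/3 + 1) := by
    rw [← Finset.card_range ((n+2)/3 + 1 + ((n-1)/3 + 1))]
    apply Finset.card_nbij'
      (i := fun t => if t.1 = 0 then t.2.1 else (n+2)/3 + 1 + t.2.1)
      (j := fun m => if m ≤ (n+2)/3 then (0, m, 0) else (1, m - (n+2)/3 - 1, 0))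
    · rintro ⟨e, i, j⟩ ht
      rw [Finset.mem_coe, mem_filter, mem_Wf] at ht
      rw [Finset.mem_coe, mem_range]
      dsimp only at ht ⊢
      split_ifs <;> omega
    · intro m hm
      rw [Finset.mem_coe, mem_range] at hm
      by_cases hh1 : m ≤ (n+2)/3
      · dsimp only; rw [if_pos hh1, Finset.mem_coe, mem_filter, mem_Wf]
        dsimp only
        omega
      · dsimp only; rw [if_neg hh1, Finset.mem_coe, mem_filter, mem_Wf]
        dsimp only
        omega
    · rintro ⟨e, i, j⟩ ht
      rw [Finset.mem_coe, mem_filter, mem_Wf] at ht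
      dsimp only at ht ⊢
      by_cases hh1 : e = 0
      · rw [if_pos hh1, if_pos (by omega)]
        simp only [Prod.mk.injEq, true_and, and_true]
        omega
      · rw [if_neg hh1, if_neg (by omega)]
        simp only [Prod.mk.injEq, true_and, and_true]
        omega
    · intro m hm
      rw [Finset.mem_coe, mem_range] at hm
      by_cases hh1 : m ≤ (n+2)/3
      · dsimp only; rw [if_pos hh1]
        dsimp only
        rw [if_pos rfl]
      · dsimp only; rw [if_neg hh1]
        dsimp only
        rw [if_neg (by omega)]
        omega
  omega

lemma cardWf : ∀ n : ℕ, 2 ≤ n →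
    6 * (Wf n).card = if 3 ∣ n then n^2 + 3*n + 6 else (n+2)*(n+1) := by
  intro n
  induction n using Nat.strong_induction_on with
  | _ n ih =>
  intro hn
  rcases Nat.lt_or_ge n 4 with h4 | h4
  · interval_cases n
    · decide
    · decide
  · obtain ⟨m, rfl⟩ : ∃ m, n = m + 2 := ⟨n - 2, by omega⟩
    have hrec := wfRec m (by omega)
    have hih := ih m (by omega) (by omega)
    by_cases hA : 3 ∣ (m + 2) <;> by_cases hB : 3 ∣ m
    · omega
    · -- m ≡ 1 mod 3
      rw [if_pos hA]
      rw [if_neg hB] at hih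
      have hk2 : 6 * (Wf (m+2)).card = 6 * (Wf m).card + 4*m + 14 := by omega
      zify at hih hk2 ⊢
      push_cast
      linear_combination hih + hk2
    · -- m ≡ 0
      rw [if_neg hA]
      rw [if_pos hB] at hih
      have hk2 : 6 * (Wf (m+2)).card = 6 * (Wf m).card + 4*m + 6 := by omega
      zify at hih hk2 ⊢
      push_cast
      linear_combination hih + hk2
    · -- m ≡ 2
      rw [if_neg hA]
      rw [if_neg hB] at hih
      have hk2 : 6 * (Wf (m+2)).card = 6 * (Wf m).card + 4*m + 10 := by omega
      zify at hih hk2 ⊢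
      push_cast
      linear_combination hih + hk2


lemma h6key (n : ℕ) (hn : 2 ≤ n) :
    6 * uCount n = if 3 ∣ n then n^2 + 3*n + 6 else (n+2)*(n+1) := by
  rw [uCount_eq_cardTf hn, cardTf_eq_cardWf hn]
  exact cardWf n hn

lemma choose2 (m : ℕ) : 2 * Nat.choose (m+2) 2 = (m+1)*(m+2) := by
  induction m with
  | zero => rfl
  | succ k ih =>
    have h : k + 1 + 2 = (k + 2) + 1 := by ring
    rw [h, Nat.choose_succ_succ (k+2) 1, Nat.choose_one_right]
    zify at ih ⊢
    linear_combination ih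
lemma choose3 (m : ℕ) : 6 * Nat.choose (m+3) 3 = (m+1)*(m+2)*(m+3) := by
  induction m with
  | zero => rfl
  | succ k ih =>
    have h : k + 1 + 3 = (k + 3) + 1 := by ring
    rw [h, Nat.choose_succ_succ (k+3) 2]
    have h2 := choose2 (k+1)
    have h2' : k + 1 + 2 = k + 3 := by ring
    rw [h2'] at h2
    zify at ih h2 ⊢
    linear_combination ih + 3 * h2

/-- Lemma 2.7 of Jayne–Misra: for all `n ≥ 2`,
`u_n = (1/(n+3)) Σ_{d | gcd(n,3)} φ(d) C((n+3)/d, 3/d)`; explicitly,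
`u_n = (n+2)(n+1)/6` if `3 ∤ n` and `u_n = (n² + 3n + 6)/6` if `3 ∣ n`. -/
theorem stmt_12 (n : ℕ) (hn : 2 ≤ n) :
    (uCount n : ℚ) = (1 / ((n : ℚ) + 3)) *
        ∑ d ∈ (Nat.gcd n 3).divisors,
          (Nat.totient d : ℚ) * (Nat.choose ((n + 3) / d) (3 / d) : ℚ) ∧
    (¬ (3 ∣ n) → (uCount n : ℚ) = ((n : ℚ) + 2) * ((n : ℚ) + 1) / 6) ∧
    ((3 ∣ n) → (uCount n : ℚ) = ((n : ℚ) ^ 2 + 3 * n + 6) / 6) := by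
  have h6 := h6key n hn
  have hn3 : (n : ℚ) + 3 ≠ 0 := by positivity
  have hQ1 : ¬ (3 ∣ n) → (uCount n : ℚ) = ((n : ℚ) + 2) * ((n : ℚ) + 1) / 6 := by
    intro h
    rw [if_neg h] at h6
    have hc : ((6 * uCount n : ℕ) : ℚ) = (((n+2)*(n+1) : ℕ) : ℚ) := by exact_mod_cast h6
    push_cast at hc
    linarith
  have hQ2 : (3 ∣ n) → (uCount n : ℚ) = ((n : ℚ) ^ 2 + 3 * n + 6) / 6 := by
    intro h
    rw [if_pos h] at h6
    have hc : ((6 * uCount n : ℕ) : ℚ) = ((n^2 + 3*n + 6 : ℕ) : ℚ) := by exact_mod_cast h6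
    push_cast at hc
    linarith
  refine ⟨?_, hQ1, hQ2⟩
  by_cases hdvd : 3 ∣ n
  · obtain ⟨t, rfl⟩ := hdvd
    have hg : Nat.gcd (3*t) 3 = 3 := by
      rw [Nat.gcd_comm]
      exact Nat.gcd_eq_left ⟨t, rfl⟩
    rw [hg, (Nat.prime_three).divisors, Finset.sum_insert (by decide), Finset.sum_singleton]
    have e1 : (3*t + 3) / 1 = 3*t+3 := by omega
    have e2 : (3 : ℕ) / 1 = 3 := by omega
    have e3 : (3*t + 3) / 3 = t + 1 := by omega
    have e4 : (3 : ℕ) / 3 = 1 := by omega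
    rw [e1, e2, e3, e4, Nat.choose_one_right, Nat.totient_one]
    have ht2 : Nat.totient 3 = 2 := by decide
    rw [ht2]
    have hC : ((6 * Nat.choose (3*t+3) 3 : ℕ) : ℚ)
        = (((3*t+1)*(3*t+2)*(3*t+3) : ℕ) : ℚ) := by
      exact_mod_cast choose3 (3*t)
    push_cast at hC
    rw [hQ2 ⟨t, rfl⟩]
    push_cast
    field_simp
    ring_nf
    ring_nf at hC
    linarith [hC]
  · have hg : Nat.gcd n 3 = 1 := by
      rcases (Nat.dvd_prime Nat.prime_three).mp (Nat.gcd_dvd_right n 3) with h | h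
      · exact h
      · exfalso; exact hdvd (h ▸ Nat.gcd_dvd_left n 3)
    rw [hg, Nat.divisors_one, Finset.sum_singleton]
    have e1 : (n + 3) / 1 = n + 3 := by omega
    have e2 : (3 : ℕ) / 1 = 3 := by omega
    rw [e1, e2, Nat.totient_one]
    have hC : ((6 * Nat.choose (n+3) 3 : ℕ) : ℚ) = (((n+1)*(n+2)*(n+3) : ℕ) : ℚ) := by
      exact_mod_cast choose3 n
    push_cast at hC
    rw [hQ1 hdvd]
    push_cast
    field_simp
    ring_nf
    ring_nf at hC
    linarith [hC]
end

section
/- Let n ≥ 2 and 1 ≤ ℓ ≤ ⌊n/2⌋. The number of pairs (Y_1, Y_2) ∈ B(2Λ_0) whose total box-color counts are exactly ℓ boxes of color 0, exactly ℓ−j boxes of each of the colors j and n−j for every 1 ≤ j ≤ ℓ−1, and no boxes of any other color, equals the ℓ-th Catalan number C(2ℓ, ℓ)/(ℓ+1). -/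
/-- A charge-0 extended Young diagram: a weakly increasing sequence of nonpositive
integers which is eventually `0`. -/
def IsEYD0 (y : ℕ → ℤ) : Prop :=
  Monotone y ∧ (∀ i, y i ≤ 0) ∧ ∃ N, ∀ i, N ≤ i → y i = 0

/-- The number of boxes of the charge-0 extended Young diagram `y` of color `j`
(a residue mod `n`): boxes are pairs `(i, b)` with `y i ≤ b ≤ -1`, and the box
`(i, b)` has color `(i + b + 1) mod n`. -/
noncomputable def colorCount (n : ℕ) (y : ℕ → ℤ) (j : ℕ) : ℕ :=
  Set.ncard {p : ℕ × ℤ |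
    y p.1 ≤ p.2 ∧ p.2 ≤ -1 ∧ ((p.1 : ℤ) + p.2 + 1) % (n : ℤ) = (j : ℤ)}

/-- Membership in the crystal `B(kΛ_0)` for a `k`-tuple `(Y 1, …, Y k)` of charge-0
extended Young diagrams (recall `Y ⊇ Y'` means `Y_i ≤ Y'_i` for all `i`):
`Y_1 ⊇ Y_2 ⊇ ⋯ ⊇ Y_k ⊇ Y_1[n]`, and for each `i ≥ 0` there is `1 ≤ j ≤ k` with
`(Y_{j+1})_i > (Y_j)_{i+1}`, where `Y_{k+1} = Y_1[n]`. -/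
def MemB (n k : ℕ) (Y : ℕ → ℕ → ℤ) : Prop :=
  (∀ j, 1 ≤ j → j ≤ k → IsEYD0 (Y j)) ∧
  (∀ j, 1 ≤ j → j < k → ∀ i, Y j i ≤ Y (j + 1) i) ∧
  (∀ i, Y k i ≤ Y 1 i + (n : ℤ)) ∧
  (∀ i : ℕ, ∃ j, 1 ≤ j ∧ j ≤ k ∧
    Y j (i + 1) < (if j = k then Y 1 i + (n : ℤ) else Y (j + 1) i))

/-- The `k`-tuple `(Y 1, …, Y k)` has total box-color counts of the weight
`kΛ_0 - γ_ℓ`: exactly `ℓ` boxes of color `0`, exactly `ℓ - j` boxes of each of the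
colors `j` and `n - j` for `1 ≤ j ≤ ℓ - 1`, and no boxes of any other color. -/
def WeightCond (n k ℓ : ℕ) (Y : ℕ → ℕ → ℤ) : Prop :=
  ∀ c, c < n →
    (∑ j ∈ Finset.Icc 1 k, colorCount n (Y j) c) =
      (if c = 0 then ℓ
       else if c ≤ ℓ - 1 then ℓ - c
       else if n - ℓ + 1 ≤ c then ℓ - (n - c)
       else 0)

namespace Stmt15
open Finset DyckStep

lemma filter_dc_iff {P : ℕ → Prop} [DecidablePred P] {m : ℕ}
    (hP : ∀ i j, i ≤ j → j < m → P j → P i) {i : ℕ} (him : i < m) :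
    P i ↔ i < ((Finset.range m).filter P).card := by
  constructor
  · intro hPi
    have hsub : Finset.range (i+1) ⊆ (Finset.range m).filter P := by
      intro j hj
      rw [Finset.mem_range] at hj
      rw [Finset.mem_filter, Finset.mem_range]
      exact ⟨lt_of_lt_of_le hj him, hP j i (Nat.lt_succ_iff.mp hj) him hPi⟩
    simpa using Finset.card_le_card hsub
  · intro hlt
    by_contra hPi
    have hsub : (Finset.range m).filter P ⊆ Finset.range i := by
      intro j hj
      rw [Finset.mem_filter, Finset.mem_range] at hj
      rw [Finset.mem_range]
      by_contra hji
      exact hPi (hP i j (le_of_not_gt hji) hj.1 hj.2)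
    have := Finset.card_le_card hsub
    simp at this
    omega

/-- The set of staircase-bounded antitone sequences. -/
def InD (ℓ : ℕ) (d : ℕ → ℕ) : Prop :=
  Antitone d ∧ (∀ i, d i ≤ ℓ) ∧ (∀ i, i < ℓ → ℓ ≤ d i + i) ∧ (∀ i, ℓ ≤ i → d i = 0)

def q (ℓ : ℕ) (d : ℕ → ℕ) (i : ℕ) : ℕ := i + (ℓ - d i)

lemma q_strictMono {ℓ : ℕ} {d : ℕ → ℕ} (hd : Antitone d) : StrictMono (q ℓ d) := by
  intro i j hij
  have := hd hij.le
  unfold q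
  omega

def wordList (ℓ : ℕ) (d : ℕ → ℕ) : List DyckStep :=
  (List.range (2*ℓ)).map (fun k => if ∃ i ∈ Finset.range ℓ, k = q ℓ d i then U else D)

lemma length_wordList (ℓ : ℕ) (d : ℕ → ℕ) : (wordList ℓ d).length = 2*ℓ := by
  simp [wordList]

lemma countP_range (p : ℕ → Bool) (m : ℕ) :
    (List.range m).countP p = ((Finset.range m).filter (fun i => p i = true)).card := by
  induction m with
  | zero => simp
  | succ k ih =>
    rw [List.range_succ, Finset.range_add_one, List.countP_append, ih]
    by_cases h : p k = true <;>
      simp [h, Finset.filter_insert, Finset.card_insert_of_notMem]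

lemma countU_take (ℓ : ℕ) (d : ℕ → ℕ) (hd : Antitone d) (m : ℕ) :
    ((wordList ℓ d).take m).count U
      = ((Finset.range ℓ).filter (fun i => q ℓ d i < min m (2*ℓ))).card := by
  rw [wordList, ← List.map_take, List.take_range]
  rw [show ∀ l : List DyckStep, l.count U = l.countP (· == U) from fun _ => rfl]
  rw [List.countP_map, countP_range]
  rw [show ((Finset.range (min m (2*ℓ))).filter
      (fun k => (((· == U) ∘ fun k => if ∃ i ∈ Finset.range ℓ, k = q ℓ d i then U else D) k) = true))
      = (Finset.range (min m (2*ℓ))).filter (fun k => ∃ i ∈ Finset.range ℓ, k = q ℓ d i) from ?_]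
  · -- card of filter of range = card of preimage filter
    rw [show (Finset.range (min m (2*ℓ))).filter (fun k => ∃ i ∈ Finset.range ℓ, k = q ℓ d i)
        = ((Finset.range ℓ).filter (fun i => q ℓ d i < min m (2*ℓ))).image (q ℓ d) from ?_]
    · exact Finset.card_image_of_injective _ (q_strictMono hd).injective
    · ext k
      simp only [Finset.mem_filter, Finset.mem_range, Finset.mem_image]
      constructor
      · rintro ⟨hk, i, hi, rfl⟩
        exact ⟨i, ⟨hi, hk⟩, rfl⟩
      · rintro ⟨i, ⟨hi, hq⟩, rfl⟩
        exact ⟨hq, i, hi, rfl⟩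
  · ext k
    by_cases h : ∃ i ∈ Finset.range ℓ, k = q ℓ d i <;> simp [h]

lemma countUD (l : List DyckStep) : l.count U + l.count D = l.length := by
  induction l with
  | nil => simp
  | cons a t ih => cases a <;> simp [List.count_cons] <;> omega

lemma countU_all (ℓ : ℕ) (d : ℕ → ℕ) (hd : Antitone d) (hs : ∀ i, i < ℓ → ℓ ≤ d i + i) :
    (wordList ℓ d).count U = ℓ := by
  have h := countU_take ℓ d hd (2*ℓ)
  rw [List.take_of_length_le (by rw [length_wordList])] at h
  rw [h]
  rw [show (Finset.range ℓ).filter (fun i => q ℓ d i < min (2*ℓ) (2*ℓ)) = Finset.range ℓ from ?_]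
  · simp
  · apply Finset.filter_true_of_mem
    intro i hi
    rw [Finset.mem_range] at hi
    have := hs i hi
    unfold q
    omega

/-- The Dyck word associated to a staircase sequence. -/
def W (ℓ : ℕ) (d : ℕ → ℕ) (hd : Antitone d) (hs : ∀ i, i < ℓ → ℓ ≤ d i + i) : DyckWord where
  toList := wordList ℓ d
  count_U_eq_count_D := by
    have h1 := countU_all ℓ d hd hs
    have h2 := countUD (wordList ℓ d)
    rw [length_wordList] at h2
    omega
  count_D_le_count_U := by
    intro m
    have h1 := countU_take ℓ d hd m
    have h2 := countUD ((wordList ℓ d).take m)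
    have h3 : ((wordList ℓ d).take m).length = min m (2*ℓ) := by
      rw [List.length_take, length_wordList]
    have hdc : ∀ i j, i ≤ j → j < ℓ → q ℓ d j < min m (2*ℓ) → q ℓ d i < min m (2*ℓ) := by
      intro i j hij hjl hql
      rcases eq_or_lt_of_le hij with rfl | h
      · exact hql
      · exact lt_trans (q_strictMono hd h) hql
    have hdc' : ∀ i j, i ≤ j → j < ℓ → (fun i => q ℓ d i < min m (2*ℓ)) j → (fun i => q ℓ d i < min m (2*ℓ)) i := hdc
    have haℓ : ((Finset.range ℓ).filter (fun i => q ℓ d i < min m (2*ℓ))).card ≤ ℓ :=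
      le_trans (Finset.card_le_card (Finset.filter_subset _ _)) (by simp)
    have key : min m (2*ℓ) ≤ 2*((Finset.range ℓ).filter (fun i => q ℓ d i < min m (2*ℓ))).card := by
      rcases eq_or_lt_of_le haℓ with heq | hal
      · omega
      · have h4 := (filter_dc_iff hdc' hal).not.mpr (by omega)
        have h5 := hs _ hal
        have h6 : q ℓ d ((Finset.range ℓ).filter (fun i => q ℓ d i < min m (2*ℓ))).card
            = ((Finset.range ℓ).filter (fun i => q ℓ d i < min m (2*ℓ))).card
              + (ℓ - d ((Finset.range ℓ).filter (fun i => q ℓ d i < min m (2*ℓ))).card) := rfl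
        omega
    omega

lemma semilength_W (ℓ : ℕ) (d : ℕ → ℕ) (hd : Antitone d) (hs : ∀ i, i < ℓ → ℓ ≤ d i + i) :
    (W ℓ d hd hs).semilength = ℓ := countU_all ℓ d hd hs

def ucnt (w : List DyckStep) (k : ℕ) : ℕ := (w.take k).count U

lemma ucnt_mono (w : List DyckStep) : Monotone (ucnt w) := by
  intro k k' hk
  unfold ucnt
  rw [show w.take k = (w.take k').take k by rw [List.take_take, min_eq_left hk]]
  exact (List.take_sublist _ _).count_le _

lemma ucnt_succ (w : List DyckStep) (k : ℕ) :
    ucnt w (k+1) = ucnt w k + (w[k]?.toList).count U := by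
  unfold ucnt
  rw [List.take_succ, List.count_append]

lemma countUD' (l : List DyckStep) : l.count U + l.count D = l.length := by
  induction l with
  | nil => simp
  | cons a t ih => cases a <;> simp [List.count_cons] <;> omega

lemma ucnt_le (w : List DyckStep) (k : ℕ) : ucnt w k ≤ k := by
  have h1 : (w.take k).count U ≤ (w.take k).length := List.count_le_length ..
  have h2 : (w.take k).length ≤ k := List.length_take_le ..
  exact le_trans h1 h2

lemma ucnt_le_count (w : List DyckStep) (k : ℕ) : ucnt w k ≤ w.count U :=
  (List.take_sublist _ _).count_le _

lemma sig_ex (p : DyckWord) {i : ℕ} (h : i < p.semilength) :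
    ∃ k, i < ucnt p.toList (k+1) := by
  refine ⟨p.toList.length, ?_⟩
  unfold ucnt
  rw [List.take_of_length_le (by omega)]
  exact h

noncomputable def G (p : DyckWord) (i : ℕ) : ℕ :=
  if h : i < p.semilength then p.semilength - (Nat.find (sig_ex p h) - i) else 0

lemma sig_spec (p : DyckWord) {i : ℕ} (h : i < p.semilength) :
    ucnt p.toList (Nat.find (sig_ex p h)) = i ∧
    ucnt p.toList (Nat.find (sig_ex p h) + 1) = i + 1 ∧
    p.toList[Nat.find (sig_ex p h)]? = some U ∧
    i ≤ Nat.find (sig_ex p h) ∧ Nat.find (sig_ex p h) < p.toList.length := by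
  set k := Nat.find (sig_ex p h) with hk
  have hspec : i < ucnt p.toList (k+1) := Nat.find_spec (sig_ex p h)
  have hle : ucnt p.toList k ≤ i := by
    by_cases h0 : k = 0
    · rw [h0]; simp [ucnt]
    · have h1 : k - 1 < Nat.find (sig_ex p h) := by omega
      have h3 := Nat.find_min (sig_ex p h) h1
      have h2 : k - 1 + 1 = k := by omega
      rw [h2] at h3
      omega
  have hsucc := ucnt_succ p.toList k
  have hcle : (p.toList[k]?.toList).count U ≤ 1 := by
    cases hopt : p.toList[k]? with
    | none => simp
    | some a => cases a <;> simp
  have hU : p.toList[k]? = some U := by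
    cases hopt : p.toList[k]? with
    | none => rw [hopt] at hsucc; simp at hsucc; omega
    | some a => cases a with
      | U => rfl
      | D => rw [hopt] at hsucc; simp at hsucc; omega
  have hklen : k < p.toList.length := by
    by_contra hc
    rw [List.getElem?_eq_none (by omega)] at hU
    simp at hU
  rw [hU] at hsucc
  simp at hsucc
  refine ⟨by omega, by omega, hU, ?_, hklen⟩
  have := ucnt_le p.toList k
  omega

lemma countD_take (p : DyckWord) (k : ℕ) (hk : k ≤ p.toList.length) :
    (p.toList.take k).count D = k - ucnt p.toList k := by
  have h1 := countUD' (p.toList.take k)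
  have h2 : (p.toList.take k).length = k := by rw [List.length_take]; omega
  unfold ucnt
  omega

lemma G_InD (p : DyckWord) : (Antitone (G p)) ∧ (∀ i, G p i ≤ p.semilength) ∧
    (∀ i, i < p.semilength → p.semilength ≤ G p i + i) ∧ (∀ i, p.semilength ≤ i → G p i = 0) := by
  have hlen := p.two_mul_semilength_eq_length
  have hstep : ∀ i (h : i + 1 < p.semilength),
      Nat.find (sig_ex p h) ≥ Nat.find (sig_ex p (by omega : i < p.semilength)) + 1 := by
    intro i h
    have h1 := (sig_spec p h).2.1
    have h2 := (sig_spec p (by omega : i < p.semilength)).2.1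
    by_contra hc
    have := ucnt_mono p.toList (show Nat.find (sig_ex p h) + 1 ≤
      Nat.find (sig_ex p (by omega : i < p.semilength)) + 1 by omega)
    omega
  have hstair : ∀ i (h : i < p.semilength),
      Nat.find (sig_ex p h) - i ≤ i := by
    intro i h
    have hs := sig_spec p h
    have hd := p.count_D_le_count_U (Nat.find (sig_ex p h))
    have hdt := countD_take p (Nat.find (sig_ex p h)) hs.2.2.2.2.le
    unfold ucnt at *
    have hs1 := hs.1
    omega
  refine ⟨?_, ?_, ?_, ?_⟩
  · apply antitone_nat_of_succ_le
    intro i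
    unfold G
    by_cases h1 : i + 1 < p.semilength
    · have h0 : i < p.semilength := by omega
      rw [dif_pos h1, dif_pos h0]
      have := hstep i h1
      have h2 := (sig_spec p h0).2.2.2.1
      omega
    · rw [dif_neg h1]
      omega
  · intro i
    unfold G
    split <;> omega
  · intro i h
    unfold G
    rw [dif_pos h]
    have := hstair i h
    omega
  · intro i h
    unfold G
    rw [dif_neg (by omega)]

lemma G_pos_U (p : DyckWord) {k : ℕ} (hk : k < p.toList.length) :
    p.toList[k] = U ↔ ∃ i, ∃ (h : i < p.semilength), Nat.find (sig_ex p h) = k := by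
  constructor
  · intro hU
    have hU' : p.toList[k]? = some U := by rw [List.getElem?_eq_getElem hk, hU]
    have hsucc := ucnt_succ p.toList k
    rw [hU'] at hsucc
    simp at hsucc
    have hi : ucnt p.toList k < p.semilength := by
      have := ucnt_le_count p.toList (k+1)
      rw [DyckWord.semilength]
      omega
    refine ⟨ucnt p.toList k, hi, ?_⟩
    rw [Nat.find_eq_iff]
    refine ⟨by omega, ?_⟩
    intro k' hk'
    have := ucnt_mono p.toList (show k' + 1 ≤ k by omega)
    omega
  · rintro ⟨i, h, rfl⟩
    have := (sig_spec p h).2.2.1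
    rw [List.getElem?_eq_getElem hk] at this
    exact Option.some.injEq .. ▸ (by simpa using this)

lemma q_G (p : DyckWord) {i : ℕ} (h : i < p.semilength) :
    q p.semilength (G p) i = Nat.find (sig_ex p h) := by
  have hs := sig_spec p h
  have hlen := p.two_mul_semilength_eq_length
  have hfi : Nat.find (sig_ex p h) - i ≤ p.semilength := by
    have hdt := countD_take p (Nat.find (sig_ex p h)) hs.2.2.2.2.le
    have hdle : (p.toList.take (Nat.find (sig_ex p h))).count D ≤ p.toList.count D :=
      (List.take_sublist _ _).count_le _
    have hcd : p.toList.count D = p.semilength := (p.count_U_eq_count_D).symm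
    unfold ucnt at hdt
    have := hs.1
    unfold ucnt at *
    omega
  have hif := hs.2.2.2.1
  rw [q, G, dif_pos h]
  omega

lemma roundtrip2 (p : DyckWord) : wordList p.semilength (G p) = p.toList := by
  have hlen := p.two_mul_semilength_eq_length
  apply List.ext_getElem
  · rw [length_wordList]; omega
  · intro k h1 h2
    rw [length_wordList] at h1
    have hw : (wordList p.semilength (G p))[k] =
        if ∃ i ∈ Finset.range p.semilength, k = q p.semilength (G p) i then U else D := by
      simp [wordList]
    rw [hw]
    split
    · next hex =>
      obtain ⟨i, hi, hk⟩ := hex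
      rw [Finset.mem_range] at hi
      rw [q_G p hi] at hk
      exact ((G_pos_U p h2).mpr ⟨i, hi, hk.symm⟩).symm
    · next hnex =>
      rcases (p.toList[k]).dichotomy with hU | hD
      · obtain ⟨i, hi, hfind⟩ := (G_pos_U p h2).mp hU
        exact absurd ⟨i, Finset.mem_range.mpr hi, hfind ▸ (q_G p hi).symm⟩ hnex
      · exact hD.symm

lemma roundtrip1 {ℓ : ℕ} {d : ℕ → ℕ} (hd : Antitone d) (hle : ∀ i, d i ≤ ℓ)
    (hs : ∀ i, i < ℓ → ℓ ≤ d i + i) (hz : ∀ i, ℓ ≤ i → d i = 0) :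
    G (W ℓ d hd hs) = d := by
  funext i
  have hsl : (W ℓ d hd hs).semilength = ℓ := semilength_W ℓ d hd hs
  by_cases h : i < (W ℓ d hd hs).semilength
  · have hiℓ : i < ℓ := hsl ▸ h
    have hfind : Nat.find (sig_ex (W ℓ d hd hs) h) = q ℓ d i := by
      rw [Nat.find_eq_iff]
      constructor
      · show i < ucnt (W ℓ d hd hs).toList (q ℓ d i + 1)
        have hcu := countU_take ℓ d hd (q ℓ d i + 1)
        have hq2 : q ℓ d i < 2*ℓ := by
          have := hle i; unfold q; omega
        have hsub : Finset.range (i+1) ⊆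
            (Finset.range ℓ).filter (fun j => q ℓ d j < min (q ℓ d i + 1) (2*ℓ)) := by
          intro j hj
          rw [Finset.mem_range] at hj
          rw [Finset.mem_filter, Finset.mem_range]
          have hmono := (q_strictMono (ℓ := ℓ) hd).monotone (show j ≤ i by omega)
          exact ⟨by omega, by omega⟩
        have := Finset.card_le_card hsub
        rw [Finset.card_range] at this
        show i < ((W ℓ d hd hs).toList.take (q ℓ d i + 1)).count U
        have : ucnt (W ℓ d hd hs).toList (q ℓ d i + 1)
            = ((Finset.range ℓ).filter (fun j => q ℓ d j < min (q ℓ d i + 1) (2*ℓ))).card := hcu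
        unfold ucnt at this
        omega
      · intro k hk
        have hcu := countU_take ℓ d hd (k+1)
        have hsub : (Finset.range ℓ).filter (fun j => q ℓ d j < min (k+1) (2*ℓ))
            ⊆ Finset.range i := by
          intro j hj
          rw [Finset.mem_filter, Finset.mem_range] at hj
          rw [Finset.mem_range]
          have : q ℓ d j < q ℓ d i := by omega
          exact (q_strictMono hd).lt_iff_lt.mp this
        have := Finset.card_le_card hsub
        rw [Finset.card_range] at this
        intro hcon
        have h2 : ucnt (W ℓ d hd hs).toList (k + 1)
            = ((Finset.range ℓ).filter (fun j => q ℓ d j < min (k+1) (2*ℓ))).card := hcu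
        unfold ucnt at h2 hcon
        omega
    rw [G, dif_pos h, hfind, hsl]
    have := hle i
    unfold q
    omega
  · rw [G, dif_neg h]
    rw [hsl] at h
    exact (hz i (by omega)).symm

lemma ncard_InD (ℓ : ℕ) :
    {d : ℕ → ℕ | InD ℓ d}.ncard = Nat.choose (2*ℓ) ℓ / (ℓ+1) := by
  classical
  set F : {p : DyckWord // p.semilength = ℓ} → (ℕ → ℕ) := fun p => G p.1 with hF
  have hrange : Set.range F = {d : ℕ → ℕ | InD ℓ d} := by
    ext d
    constructor
    · rintro ⟨p, rfl⟩
      obtain ⟨h1, h2, h3, h4⟩ := G_InD p.1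
      rw [p.2] at h2 h3 h4
      exact ⟨h1, h2, h3, h4⟩
    · rintro ⟨h1, h2, h3, h4⟩
      exact ⟨⟨W ℓ d h1 h3, semilength_W ℓ d h1 h3⟩, roundtrip1 h1 h2 h3 h4⟩
  have hinj : Function.Injective F := by
    intro p p' hpp
    have e1 : p.1.toList = wordList ℓ (F p) := by
      rw [hF]
      have := roundtrip2 p.1
      rw [p.2] at this
      exact this.symm
    have e2 : p'.1.toList = wordList ℓ (F p') := by
      rw [hF]
      have := roundtrip2 p'.1
      rw [p'.2] at this
      exact this.symm
    apply Subtype.ext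
    apply DyckWord.ext
    rw [e1, e2, hpp]
  have h1 : {d : ℕ → ℕ | InD ℓ d}.ncard = Nat.card {d : ℕ → ℕ | InD ℓ d} :=
    (Nat.card_coe_set_eq _).symm
  rw [h1, ← hrange, Nat.card_range_of_injective hinj, Nat.card_eq_fintype_card,
    DyckWord.card_dyckWord_semilength_eq_catalan, catalan_eq_centralBinom_div]
  rfl


lemma emod_window {n : ℕ} (hn : 0 < n) (t : ℤ) (h1 : -(n:ℤ) ≤ t) (h2 : t < n) :
    t % n = if 0 ≤ t then t else t + n := by
  split
  · exact Int.emod_eq_of_lt (by assumption) h2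
  · rw [show t % (n:ℤ) = (t + n) % n from by simpa using (Int.add_mul_emod_self_left (a:=t) (b:=(n:ℤ)) (c:=1)).symm]
    exact Int.emod_eq_of_lt (by omega) (by omega)

/-- Square bounds on a diagram. -/
def Sq (ℓ : ℕ) (y : ℕ → ℤ) : Prop :=
  (∀ i, y i ≤ 0) ∧ (∀ i : ℕ, -(ℓ:ℤ) ≤ y i) ∧ (∀ i, ℓ ≤ i → y i = 0)

/-- Number of boxes of `y` (inside the `ℓ × ℓ` square) of content `t`. -/
def cc (ℓ : ℕ) (y : ℕ → ℤ) (t : ℤ) : ℕ :=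
  ((Finset.range ℓ).filter (fun i : ℕ => t ≤ (i:ℤ) ∧ y i ≤ t - (i:ℤ) - 1)).card

lemma boxSet_eq (n ℓ : ℕ) (y : ℕ → ℤ) (hy : Sq ℓ y) (c : ℕ) :
    {p : ℕ × ℤ | y p.1 ≤ p.2 ∧ p.2 ≤ -1 ∧ ((p.1 : ℤ) + p.2 + 1) % (n : ℤ) = (c : ℤ)}
      = ↑(((Finset.range ℓ) ×ˢ Finset.Icc (-(ℓ:ℤ)) (-1)).filter
          (fun p => y p.1 ≤ p.2 ∧ ((p.1 : ℤ) + p.2 + 1) % (n : ℤ) = (c : ℤ))) := by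
  ext p
  simp only [Set.mem_setOf_eq, Finset.coe_filter, Finset.mem_product, Finset.mem_range,
    Finset.mem_Icc, Set.mem_setOf_eq]
  constructor
  · rintro ⟨h1, h2, h3⟩
    have hp1 : p.1 < ℓ := by
      by_contra hc
      have := hy.2.2 p.1 (by omega)
      omega
    exact ⟨⟨hp1, hy.2.1 p.1 |>.trans h1, h2⟩, h1, h3⟩
  · rintro ⟨⟨h1, h2, h3⟩, h4, h5⟩
    exact ⟨h4, h3, h5⟩

lemma colorCount_eq_cc {n ℓ : ℕ} {y : ℕ → ℤ} (hy : Sq ℓ y) (hn : 0 < n) (hℓn : 2*ℓ ≤ n)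
    {c : ℕ} (hc : c < n) {t : ℤ} (ht1 : -(ℓ:ℤ) < t) (ht2 : t < ℓ)
    (htc : t % n = (c:ℤ)) :
    colorCount n y c = cc ℓ y t := by
  rw [colorCount, boxSet_eq n ℓ y hy c, Set.ncard_coe_finset]
  rw [show ((Finset.range ℓ) ×ˢ Finset.Icc (-(ℓ:ℤ)) (-1)).filter
        (fun p => y p.1 ≤ p.2 ∧ ((p.1 : ℤ) + p.2 + 1) % (n : ℤ) = (c : ℤ))
      = ((Finset.range ℓ).filter (fun i : ℕ => t ≤ (i:ℤ) ∧ y i ≤ t - (i:ℤ) - 1)).image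
          (fun i : ℕ => ((i : ℕ), t - (i:ℤ) - 1)) from ?_]
  · rw [Finset.card_image_of_injective]
    · rfl
    · intro a b hab
      simpa using congrArg Prod.fst hab
  · ext p
    simp only [Finset.mem_filter, Finset.mem_product, Finset.mem_range, Finset.mem_Icc,
      Finset.mem_image]
    constructor
    · rintro ⟨⟨h1, h2, h3⟩, h4, h5⟩
      -- content of the box equals t
      have hs1 : -(ℓ:ℤ) < (p.1:ℤ) + p.2 + 1 := by omega
  
      have hw1 := emod_window hn ((p.1:ℤ) + p.2 + 1) (by omega) (by omega)
      have hw2 := emod_window hn t (by omega) (by omega)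
      rw [h5] at hw1
      rw [htc] at hw2
      have hst : (p.1:ℤ) + p.2 + 1 = t := by
        split at hw1 <;> split at hw2 <;> omega
      refine ⟨p.1, ⟨h1, by omega, by omega⟩, ?_⟩
      rw [show t - (p.1:ℤ) - 1 = p.2 by omega]
    · rintro ⟨i, ⟨h1, h2, h3⟩, rfl⟩
      have hyd := hy.2.1 i
      have hcontent : (i:ℤ) + (t - (i:ℤ) - 1) + 1 = t := by ring
      dsimp only
      refine ⟨⟨h1, by omega, by omega⟩, by omega, ?_⟩
      rw [hcontent, htc]

lemma colorCount_eq_zero {n ℓ : ℕ} {y : ℕ → ℤ} (hy : Sq ℓ y) (hn : 0 < n)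
    {c : ℕ} (hno : ∀ t : ℤ, -(ℓ:ℤ) < t → t < ℓ → t % n ≠ (c:ℤ)) :
    colorCount n y c = 0 := by
  rw [colorCount]
  convert Set.ncard_empty (ℕ × ℤ)
  ext p
  simp only [Set.mem_setOf_eq, Set.mem_empty_iff_false, iff_false, not_and]
  intro h1 h2 h3
  have hp1 : p.1 < ℓ := by
    by_contra hc
    have := hy.2.2 p.1 (by omega)
    omega
  have hyd := hy.2.1 p.1
  have hs2 : (p.1:ℤ) + p.2 + 1 < ℓ := by omega
  exact hno ((p.1:ℤ) + p.2 + 1) (by omega) (by omega) h3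

def DiagCond (ℓ : ℕ) (y1 y2 : ℕ → ℤ) : Prop :=
  ∀ t : ℤ, -(ℓ:ℤ) < t → t < ℓ → cc ℓ y1 t + cc ℓ y2 t = ℓ - t.natAbs

lemma sum_Icc12 (f : ℕ → ℕ) : (∑ j ∈ Finset.Icc 1 2, f j) = f 1 + f 2 := by
  rw [show Finset.Icc 1 2 = ({1, 2} : Finset ℕ) from rfl, Finset.sum_pair (by norm_num)]

lemma wc_iff {n ℓ : ℕ} (hn : 2 ≤ n) (hℓ1 : 1 ≤ ℓ) (hℓn : 2*ℓ ≤ n) (Y : ℕ → ℕ → ℤ)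
    (h1 : Sq ℓ (Y 1)) (h2 : Sq ℓ (Y 2)) :
    WeightCond n 2 ℓ Y ↔ DiagCond ℓ (Y 1) (Y 2) := by
  have hn0 : 0 < n := by omega
  constructor
  · intro hwc t ht1 ht2
    have hmod1 : 0 ≤ t % n := Int.emod_nonneg t (by omega)
    have hmod2 : t % n < n := Int.emod_lt_of_pos t (by omega)
    have hw := emod_window hn0 t (by omega) (by omega)
    set c := (t % (n:ℤ)).toNat with hcdef
    have htc : t % (n:ℤ) = (c:ℤ) := by omega
    have hc : c < n := by omega
    have e1 := colorCount_eq_cc h1 hn0 hℓn hc ht1 ht2 htc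
    have e2 := colorCount_eq_cc h2 hn0 hℓn hc ht1 ht2 htc
    have := hwc c hc
    rw [sum_Icc12, e1, e2] at this
    rw [this]
    split_ifs <;> omega
  · intro hdc c hc
    rw [sum_Icc12]
    by_cases hc1 : c < ℓ
    · have htc : (c:ℤ) % n = (c:ℤ) := Int.emod_eq_of_lt (by omega) (by omega)
      have e1 := colorCount_eq_cc h1 hn0 hℓn hc (t := (c:ℤ)) (by omega) (by omega) htc
      have e2 := colorCount_eq_cc h2 hn0 hℓn hc (t := (c:ℤ)) (by omega) (by omega) htc
      have hd := hdc (c:ℤ) (by omega) (by omega)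
      rw [e1, e2, hd]
      split_ifs <;> omega
    · by_cases hc2 : n - ℓ + 1 ≤ c
      · have htc : ((c:ℤ) - n) % n = (c:ℤ) := by
          rw [show ((c:ℤ) - n) % n = (c:ℤ) % n from by
            simpa using (Int.sub_mul_emod_self_left (a:=(c:ℤ)) (b:=(n:ℤ)) (c:=1)).symm]
          exact Int.emod_eq_of_lt (by omega) (by omega)
        have e1 := colorCount_eq_cc h1 hn0 hℓn hc (t := (c:ℤ) - n) (by omega) (by omega) htc
        have e2 := colorCount_eq_cc h2 hn0 hℓn hc (t := (c:ℤ) - n) (by omega) (by omega) htc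
        have hd := hdc ((c:ℤ) - n) (by omega) (by omega)
        rw [e1, e2, hd]
        split_ifs <;> omega
      · have hno : ∀ t : ℤ, -(ℓ:ℤ) < t → t < ℓ → t % n ≠ (c:ℤ) := by
          intro t h h'
          have hw := emod_window hn0 t (by omega) (by omega)
          split at hw <;> omega
        rw [colorCount_eq_zero h1 hn0 hno, colorCount_eq_zero h2 hn0 hno]
        split_ifs <;> omega

/-! ### The encoding of a staircase sequence as a pair of diagrams -/

def yOf (d : ℕ → ℕ) : ℕ → ℤ := fun i => -(d i : ℤ)

def d2enc (ℓ : ℕ) (d : ℕ → ℕ) (i : ℕ) : ℕ :=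
  ((Finset.range ℓ).filter (fun j => d j + i + 1 ≤ ℓ)).card

def encode (ℓ : ℕ) (d : ℕ → ℕ) : ℕ → ℕ → ℤ := fun j =>
  if j = 1 then yOf d else if j = 2 then yOf (d2enc ℓ d) else fun _ => 0

lemma d2enc_le (ℓ : ℕ) (d : ℕ → ℕ) (i : ℕ) : d2enc ℓ d i ≤ ℓ := by
  refine le_trans (Finset.card_le_card (Finset.filter_subset _ _)) (by simp)

lemma d2enc_zero (ℓ : ℕ) (d : ℕ → ℕ) {i : ℕ} (hi : ℓ ≤ i) : d2enc ℓ d i = 0 := by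
  rw [d2enc, Finset.card_eq_zero, Finset.filter_eq_empty_iff]
  intro j hj
  omega

lemma d2enc_antitone (ℓ : ℕ) (d : ℕ → ℕ) : Antitone (d2enc ℓ d) := by
  intro i j hij
  apply Finset.card_le_card
  intro x hx
  rw [Finset.mem_filter] at hx ⊢
  exact ⟨hx.1, by omega⟩

lemma d2enc_lt (ℓ : ℕ) {d : ℕ → ℕ} (hs : ∀ i, i < ℓ → ℓ ≤ d i + i) {i : ℕ} (hi : i < ℓ) :
    d2enc ℓ d i + i + 1 ≤ ℓ := by
  have hsub : (Finset.range ℓ).filter (fun j => d j + i + 1 ≤ ℓ) ⊆ Finset.Ico (i+1) ℓ := by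
    intro j hj
    rw [Finset.mem_filter, Finset.mem_range] at hj
    rw [Finset.mem_Ico]
    have := hs j hj.1
    omega
  have := Finset.card_le_card hsub
  rw [Nat.card_Ico] at this
  rw [show d2enc ℓ d i = ((Finset.range ℓ).filter (fun j => d j + i + 1 ≤ ℓ)).card from rfl]
  omega

lemma filter_uc_iff {P : ℕ → Prop} [DecidablePred P] {m k : ℕ}
    (hP : ∀ i j, i ≤ j → j < m → P i → P j) (hk1 : 1 ≤ k) (hkm : k ≤ m) :
    (P (m - k) ↔ k ≤ ((Finset.range m).filter P).card) := by
  constructor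
  · intro hPk
    have hsub : Finset.Ico (m-k) m ⊆ (Finset.range m).filter P := by
      intro j hj
      rw [Finset.mem_Ico] at hj
      rw [Finset.mem_filter, Finset.mem_range]
      exact ⟨hj.2, hP (m-k) j hj.1 hj.2 hPk⟩
    have := Finset.card_le_card hsub
    rw [Nat.card_Ico] at this
    omega
  · intro hle
    by_contra hPk
    have hsub : (Finset.range m).filter P ⊆ Finset.Ico (m-k+1) m := by
      intro j hj
      rw [Finset.mem_filter, Finset.mem_range] at hj
      rw [Finset.mem_Ico]
      refine ⟨?_, hj.1⟩
      by_contra hji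
      exact hPk (hP j (m-k) (by omega) (by omega) hj.2)
    have := Finset.card_le_card hsub
    rw [Nat.card_Ico] at this
    omega

/-- Count-threshold characterization of `d2enc`. -/
lemma d2enc_threshold {ℓ : ℕ} {d : ℕ → ℕ} (hd : Antitone d) {i k : ℕ}
    (hk1 : 1 ≤ k) (hkℓ : k ≤ ℓ) :
    k ≤ d2enc ℓ d i ↔ d (ℓ - k) + i + 1 ≤ ℓ := by
  have huc : ∀ a b, a ≤ b → b < ℓ → (fun j => d j + i + 1 ≤ ℓ) a → (fun j => d j + i + 1 ≤ ℓ) b := by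
    intro a b hab hb ha
    have := hd hab
    omega
  exact (filter_uc_iff huc hk1 hkℓ).symm

/-- The reflection map on the diagonal of content `t`. -/
def refl' (ℓ : ℕ) (t : ℤ) (i : ℕ) : ℕ := ((ℓ:ℤ) - 1 + t - i).toNat

/-- The diagonal of content `t` of the `ℓ × ℓ` square. -/
def diag (ℓ : ℕ) (t : ℤ) : Finset ℕ :=
  (Finset.range ℓ).filter (fun i : ℕ => t ≤ (i:ℤ) ∧ (i:ℤ) + 1 ≤ (ℓ:ℤ) + t)

lemma mem_diag {ℓ : ℕ} {t : ℤ} {i : ℕ} :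
    i ∈ diag ℓ t ↔ i < ℓ ∧ t ≤ (i:ℤ) ∧ (i:ℤ) + 1 ≤ (ℓ:ℤ) + t := by
  simp [diag, Finset.mem_filter, Finset.mem_range]

lemma card_diag (ℓ : ℕ) (t : ℤ) : (diag ℓ t).card = ℓ - t.natAbs := by
  rw [show diag ℓ t = Finset.Ico t.toNat (min ((ℓ:ℤ)+t).toNat ℓ) from ?_]
  · rw [Nat.card_Ico]
    omega
  · ext i
    rw [mem_diag, Finset.mem_Ico]
    omega

lemma refl'_mem {ℓ : ℕ} {t : ℤ} {i : ℕ} (hi : i ∈ diag ℓ t) :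
    refl' ℓ t i ∈ diag ℓ t ∧ refl' ℓ t (refl' ℓ t i) = i ∧
      ((refl' ℓ t i : ℤ) = (ℓ:ℤ) - 1 + t - i) := by
  rw [mem_diag] at hi ⊢
  unfold refl'
  omega

/-- The `A`-set: boxes of `y` on the diagonal of content `t`, as a subset of `range ℓ`. -/
lemma cc_eq_card {ℓ : ℕ} {d : ℕ → ℕ} {t : ℤ} :
    cc ℓ (yOf d) t
      = ((Finset.range ℓ).filter (fun i : ℕ => t ≤ (i:ℤ) ∧ (i:ℤ) + 1 ≤ (d i : ℤ) + t)).card := by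
  unfold cc
  congr 1
  apply Finset.filter_congr
  intro i _
  unfold yOf
  constructor <;> rintro ⟨a, b⟩ <;> exact ⟨a, by omega⟩

lemma Aset_subset {ℓ : ℕ} {d : ℕ → ℕ} (hle : ∀ i, d i ≤ ℓ) (t : ℤ) :
    ((Finset.range ℓ).filter (fun i : ℕ => t ≤ (i:ℤ) ∧ (i:ℤ) + 1 ≤ (d i : ℤ) + t)) ⊆ diag ℓ t := by
  intro i hi
  rw [Finset.mem_filter, Finset.mem_range] at hi
  rw [mem_diag]
  have := hle i
  refine ⟨hi.1, hi.2.1, by omega⟩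

/-- Key diagonal lemma (forward direction): for a staircase sequence and its
complement-transpose, the diagonal box counts sum up to the full diagonal. -/
lemma diag_forward {ℓ : ℕ} {d : ℕ → ℕ} (hd : Antitone d) (hle : ∀ i, d i ≤ ℓ)
    (hs : ∀ i, i < ℓ → ℓ ≤ d i + i) (t : ℤ) :
    cc ℓ (yOf d) t + cc ℓ (yOf (d2enc ℓ d)) t = ℓ - t.natAbs := by
  classical
  set A := ((Finset.range ℓ).filter (fun i : ℕ => t ≤ (i:ℤ) ∧ (i:ℤ) + 1 ≤ (d i : ℤ) + t)) with hA
  set B := ((Finset.range ℓ).filter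
    (fun i : ℕ => t ≤ (i:ℤ) ∧ (i:ℤ) + 1 ≤ (d2enc ℓ d i : ℤ) + t)) with hB
  have hAsub : A ⊆ diag ℓ t := Aset_subset hle t
  have hBsub : B ⊆ diag ℓ t := Aset_subset (fun i => d2enc_le ℓ d i) t
  have hkey : ∀ i ∈ diag ℓ t, (i ∈ B ↔ refl' ℓ t i ∉ A) := by
    intro i hi
    obtain ⟨hρd, hρρ, hρv⟩ := refl'_mem hi
    rw [mem_diag] at hi
    set k := ((i:ℤ) + 1 - t).toNat with hk
    have hk1 : 1 ≤ k := by omega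
    have hkℓ : k ≤ ℓ := by omega
    have hρeq : refl' ℓ t i = ℓ - k := by omega
    have hth := d2enc_threshold (ℓ := ℓ) hd hk1 hkℓ (i := i)
    rw [← hρeq] at hth
    constructor
    · intro hiB
      rw [hB, Finset.mem_filter] at hiB
      have hd2 : k ≤ d2enc ℓ d i := by omega
      have := hth.mp hd2
      intro hcon
      rw [hA, Finset.mem_filter] at hcon
      omega
    · intro hnA
      rw [hB, Finset.mem_filter, Finset.mem_range]
      have : ¬ ((refl' ℓ t i : ℤ) + 1 ≤ (d (refl' ℓ t i) : ℤ) + t) := by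
        intro hcon
        apply hnA
        rw [hA, Finset.mem_filter, Finset.mem_range]
        rw [mem_diag] at hρd
        exact ⟨hρd.1, hρd.2.1, hcon⟩
      have hd2 : k ≤ d2enc ℓ d i := hth.mpr (by omega)
      exact ⟨by omega, by omega, by omega⟩
  have hBeq : B = (diag ℓ t \ A).image (refl' ℓ t) := by
    ext j
    constructor
    · intro hj
      have hjd := hBsub hj
      obtain ⟨hρd, hρρ, _⟩ := refl'_mem hjd
      rw [Finset.mem_image]
      refine ⟨refl' ℓ t j, ?_, hρρ⟩
      rw [Finset.mem_sdiff]
      refine ⟨hρd, ?_⟩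
      have := (hkey (refl' ℓ t j) hρd)
      rw [hρρ] at this
      intro hcon
      -- refl' j ∈ A; but j ∈ B means refl' j ∉ A
      exact ((hkey j hjd).mp hj) hcon
    · intro hj
      rw [Finset.mem_image] at hj
      obtain ⟨i, hi, rfl⟩ := hj
      rw [Finset.mem_sdiff] at hi
      obtain ⟨hρd, hρρ, _⟩ := refl'_mem hi.1
      have := (hkey (refl' ℓ t i) hρd)
      rw [hρρ] at this
      exact this.mpr hi.2
  have hinj : Set.InjOn (refl' ℓ t) ↑(diag ℓ t \ A) := by
    intro a ha b hb hab
    rw [Finset.mem_coe, Finset.mem_sdiff] at ha hb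
    have ha' := refl'_mem ha.1
    have hb' := refl'_mem hb.1
    rw [← ha'.2.1, ← hb'.2.1, hab]
  have hcard : B.card = (diag ℓ t).card - A.card := by
    rw [hBeq, Finset.card_image_of_injOn hinj, Finset.card_sdiff_of_subset hAsub]
  have hAle := Finset.card_le_card hAsub
  rw [card_diag] at hAle
  rw [cc_eq_card, cc_eq_card, ← hA, ← hB, hcard, card_diag]
  omega

lemma sq_yOf {ℓ : ℕ} {d : ℕ → ℕ} (hle : ∀ i, d i ≤ ℓ) (hz : ∀ i, ℓ ≤ i → d i = 0) :
    Sq ℓ (yOf d) := by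
  refine ⟨fun i => by simp [yOf], fun i => ?_, fun i hi => by simp [yOf, hz i hi]⟩
  have := hle i
  simp only [yOf]
  omega

lemma isEYD0_yOf {ℓ : ℕ} {d : ℕ → ℕ} (hd : Antitone d) (hz : ∀ i, ℓ ≤ i → d i = 0) :
    IsEYD0 (yOf d) := by
  refine ⟨fun a b hab => ?_, fun i => by simp [yOf], ⟨ℓ, fun i hi => by simp [yOf, hz i hi]⟩⟩
  have := hd hab
  simp only [yOf]
  omega

lemma encode_one (ℓ : ℕ) (d : ℕ → ℕ) : encode ℓ d 1 = yOf d := rfl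
lemma encode_two (ℓ : ℕ) (d : ℕ → ℕ) : encode ℓ d 2 = yOf (d2enc ℓ d) := rfl

lemma encode_mem {n ℓ : ℕ} (hn : 2 ≤ n) (hℓ1 : 1 ≤ ℓ) (hℓn : 2*ℓ ≤ n)
    {d : ℕ → ℕ} (hInD : InD ℓ d) :
    MemB n 2 (encode ℓ d) ∧ WeightCond n 2 ℓ (encode ℓ d) ∧
      ∀ j, j = 0 ∨ 2 < j → encode ℓ d j = fun _ => 0 := by
  obtain ⟨hd, hle, hs, hz⟩ := hInD
  have hd2le : ∀ i, d2enc ℓ d i ≤ d i := by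
    intro i
    by_cases hi : i < ℓ
    · have := d2enc_lt ℓ hs hi
      have := hs i hi
      omega
    · rw [d2enc_zero ℓ d (by omega)]
      omega
  refine ⟨⟨?_, ?_, ?_, ?_⟩, ?_, ?_⟩
  · intro j hj1 hj2
    have : j = 1 ∨ j = 2 := by omega
    rcases this with rfl | rfl
    · exact isEYD0_yOf hd hz
    · exact isEYD0_yOf (d2enc_antitone ℓ d) (fun i hi => d2enc_zero ℓ d hi)
  · intro j hj1 hj2 i
    have : j = 1 := by omega
    subst this
    rw [encode_one, show (1+1 : ℕ) = 2 from rfl, encode_two]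
    have := hd2le i
    simp only [yOf]
    omega
  · intro i
    rw [encode_one, encode_two]
    have := hle i
    simp only [yOf]
    omega
  · intro i
    refine ⟨2, by omega, le_refl 2, ?_⟩
    rw [if_pos rfl, encode_one, encode_two]
    have h1 := hle i
    simp only [yOf]
    have : (d i : ℤ) < n + d2enc ℓ d (i+1) := by
      have : ℓ < n := by omega
      omega
    omega
  · rw [wc_iff hn hℓ1 hℓn _ (by rw [encode_one]; exact sq_yOf hle hz)
      (by rw [encode_two]; exact sq_yOf (fun i => d2enc_le ℓ d i) (fun i hi => d2enc_zero ℓ d hi))]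
    intro t ht1 ht2
    rw [encode_one, encode_two]
    exact diag_forward hd hle hs t
  · intro j hj
    have : ¬ (j = 1) := by omega
    have h2 : ¬ (j = 2) := by omega
    simp [encode, this, h2]

lemma colorCount_pos {n : ℕ} {y : ℕ → ℤ} (hE : IsEYD0 y) {i0 : ℕ} {b : ℤ}
    (hb1 : y i0 ≤ b) (hb2 : b ≤ -1) {c : ℕ} (hc : ((i0:ℤ) + b + 1) % n = (c:ℤ)) :
    0 < colorCount n y c := by
  obtain ⟨hmono, hnonpos, N, hN⟩ := hE
  rw [colorCount]
  have hfin : {p : ℕ × ℤ |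
      y p.1 ≤ p.2 ∧ p.2 ≤ -1 ∧ ((p.1 : ℤ) + p.2 + 1) % (n : ℤ) = (c : ℤ)}.Finite := by
    apply Set.Finite.subset ((Finset.range N ×ˢ Finset.Icc (y 0) (-1)).finite_toSet)
    rintro p ⟨h1, h2, h3⟩
    simp only [Finset.coe_product, Set.mem_prod, Finset.mem_coe, Finset.mem_range,
      Finset.mem_Icc]
    constructor
    · by_contra hc'
      have := hN p.1 (by omega)
      omega
    · exact ⟨le_trans (hmono (Nat.zero_le p.1)) h1, h2⟩
  rw [Set.ncard_pos hfin]
  exact ⟨(i0, b), hb1, hb2, hc⟩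

lemma sq_of_wc {n ℓ : ℕ} (hn : 2 ≤ n) (hℓ1 : 1 ≤ ℓ) (hℓn : 2*ℓ ≤ n) {Y : ℕ → ℕ → ℤ}
    (hE1 : IsEYD0 (Y 1)) (hE2 : IsEYD0 (Y 2)) (hwc : WeightCond n 2 ℓ Y) :
    Sq ℓ (Y 1) ∧ Sq ℓ (Y 2) := by
  have hgen : ∀ j, (j = 1 ∨ j = 2) →
      ((∀ i, ℓ ≤ i → Y j i = 0) ∧ (∀ i : ℕ, -(ℓ:ℤ) ≤ Y j i)) := by
    intro j hj
    have hE : IsEYD0 (Y j) := by rcases hj with rfl | rfl <;> assumption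
    constructor
    · intro i hi
      by_contra hne
      have hYi : Y j i ≤ -1 := by
        have := hE.2.1 i
        omega
      have hYℓ : Y j ℓ ≤ -1 := le_trans (hE.1 hi) hYi
      have hcℓ : ((ℓ:ℤ) + (-1) + 1) % (n:ℤ) = ((ℓ:ℕ):ℤ) := by
        rw [show (ℓ:ℤ) + (-1) + 1 = (ℓ:ℤ) by ring]
        exact Int.emod_eq_of_lt (by omega) (by omega)
      have hpos := colorCount_pos hE (i0 := ℓ) (b := -1) hYℓ (by omega) (c := ℓ) hcℓ
      have hwcℓ := hwc ℓ (by omega)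
      rw [sum_Icc12] at hwcℓ
      have h0 : (if ℓ = 0 then ℓ else if ℓ ≤ ℓ-1 then ℓ - ℓ
          else if n - ℓ + 1 ≤ ℓ then ℓ - (n - ℓ) else 0) = 0 := by
        split_ifs <;> omega
      rw [h0] at hwcℓ
      rcases hj with rfl | rfl <;> omega
    · intro i
      by_contra hne
      have hy0 : Y j 0 ≤ -(ℓ:ℤ) - 1 := le_trans (hE.1 (Nat.zero_le i)) (by omega)
      have hcnℓ : (((0:ℕ):ℤ) + (-(ℓ:ℤ) - 1) + 1) % (n:ℤ) = (((n - ℓ : ℕ)):ℤ) := by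
        rw [show ((0:ℕ):ℤ) + (-(ℓ:ℤ) - 1) + 1 = -(ℓ:ℤ) by push_cast; ring]
        have hw := emod_window (by omega : 0 < n) (-(ℓ:ℤ)) (by omega) (by omega)
        rw [hw, if_neg (by omega)]
        omega
      have hpos := colorCount_pos hE (i0 := 0) (b := -(ℓ:ℤ) - 1) hy0 (by omega)
        (c := n - ℓ) hcnℓ
      have hwcc := hwc (n - ℓ) (by omega)
      rw [sum_Icc12] at hwcc
      have h0 : (if n - ℓ = 0 then ℓ else if n - ℓ ≤ ℓ-1 then ℓ - (n-ℓ)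
          else if n - ℓ + 1 ≤ n - ℓ then ℓ - (n - (n-ℓ)) else 0) = 0 := by
        split_ifs <;> omega
      rw [h0] at hwcc
      rcases hj with rfl | rfl <;> omega
  obtain ⟨hc1, hd1⟩ := hgen 1 (Or.inl rfl)
  obtain ⟨hc2, hd2⟩ := hgen 2 (Or.inr rfl)
  exact ⟨⟨hE1.2.1, hd1, hc1⟩, ⟨hE2.2.1, hd2, hc2⟩⟩

/-- interval filter characterization -/
lemma interval_filter {P : ℕ → Prop} [DecidablePred P] {lo m : ℕ}
    (hlo : ∀ i, i < lo → ¬ P i)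
    (hdc : ∀ i j, lo ≤ i → i ≤ j → j < m → P j → P i)
    {i : ℕ} (hi1 : lo ≤ i) (hi2 : i < m) :
    P i ↔ i < lo + ((Finset.range m).filter P).card := by
  constructor
  · intro hPi
    have hsub : Finset.Ico lo (i+1) ⊆ (Finset.range m).filter P := by
      intro j hj
      rw [Finset.mem_Ico] at hj
      rw [Finset.mem_filter, Finset.mem_range]
      exact ⟨by omega, hdc j i hj.1 (by omega) hi2 hPi⟩
    have := Finset.card_le_card hsub
    rw [Nat.card_Ico] at this
    omega
  · intro hlt
    by_contra hPi
    have hsub : (Finset.range m).filter P ⊆ Finset.Ico lo i := by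
      intro j hj
      rw [Finset.mem_filter, Finset.mem_range] at hj
      rw [Finset.mem_Ico]
      constructor
      · by_contra hc
        exact hlo j (by omega) hj.2
      · by_contra hc
        exact hPi (hdc i j hi1 (by omega) hj.1 hj.2)
    have := Finset.card_le_card hsub
    rw [Nat.card_Ico] at this
    omega

lemma decode {n ℓ : ℕ} (hn : 2 ≤ n) (hℓ1 : 1 ≤ ℓ) (hℓn : 2*ℓ ≤ n) {Y : ℕ → ℕ → ℤ}
    (hY : MemB n 2 Y ∧ WeightCond n 2 ℓ Y ∧ ∀ j, j = 0 ∨ 2 < j → Y j = fun _ => 0) :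
    ∃ d, InD ℓ d ∧ encode ℓ d = Y := by
  classical
  obtain ⟨hmem, hwc, hpin⟩ := hY
  have hE1 : IsEYD0 (Y 1) := hmem.1 1 (le_refl _) (by omega)
  have hE2 : IsEYD0 (Y 2) := hmem.1 2 (by omega) (le_refl _)
  have h12 : ∀ i, Y 1 i ≤ Y 2 i := by
    have := hmem.2.1 1 (le_refl _) (by omega)
    simpa using this
  obtain ⟨hsq1, hsq2⟩ := sq_of_wc hn hℓ1 hℓn hE1 hE2 hwc
  set d1 : ℕ → ℕ := fun i => (-(Y 1 i)).toNat with hd1def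
  set d2 : ℕ → ℕ := fun i => (-(Y 2 i)).toNat with hd2def
  have hy1 : ∀ i, Y 1 i = -(d1 i : ℤ) := by
    intro i
    have := hsq1.1 i
    simp only [hd1def]
    omega
  have hy2 : ∀ i, Y 2 i = -(d2 i : ℤ) := by
    intro i
    have := hsq2.1 i
    simp only [hd2def]
    omega
  have hY1 : Y 1 = yOf d1 := funext fun i => by rw [hy1 i]; rfl
  have hY2 : Y 2 = yOf d2 := funext fun i => by rw [hy2 i]; rfl
  have hd1anti : Antitone d1 := by
    intro a b hab
    have := hE1.1 hab
    simp only [hd1def]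
    omega
  have hd2anti : Antitone d2 := by
    intro a b hab
    have := hE2.1 hab
    simp only [hd2def]
    omega
  have hd1le : ∀ i, d1 i ≤ ℓ := by
    intro i
    have := hsq1.2.1 i
    simp only [hd1def]
    omega
  have hd2le : ∀ i, d2 i ≤ ℓ := by
    intro i
    have := hsq2.2.1 i
    simp only [hd2def]
    omega
  have hd1z : ∀ i, ℓ ≤ i → d1 i = 0 := by
    intro i hi
    have := hsq1.2.2 i hi
    simp only [hd1def]
    omega
  have hd2z : ∀ i, ℓ ≤ i → d2 i = 0 := by
    intro i hi
    have := hsq2.2.2 i hi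
    simp only [hd2def]
    omega
  have hd21 : ∀ i, d2 i ≤ d1 i := by
    intro i
    have := h12 i
    rw [hy1 i, hy2 i] at this
    omega
  have hdiag : DiagCond ℓ (Y 1) (Y 2) := (wc_iff hn hℓ1 hℓn Y hsq1 hsq2).mp hwc
  -- the pointwise reflection statement
  have hpt : ∀ i k, i < ℓ → 1 ≤ k → k ≤ ℓ → (k ≤ d2 i ↔ d1 (ℓ - k) + i < ℓ) := by
    intro i k hi hk1 hkℓ
    set t : ℤ := (i:ℤ) + 1 - k with ht
    have ht1 : -(ℓ:ℤ) < t := by omega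
    have ht2 : t < ℓ := by omega
    set A := ((Finset.range ℓ).filter
      (fun i' : ℕ => t ≤ (i':ℤ) ∧ (i':ℤ) + 1 ≤ (d1 i' : ℤ) + t)) with hA
    set B := ((Finset.range ℓ).filter
      (fun i' : ℕ => t ≤ (i':ℤ) ∧ (i':ℤ) + 1 ≤ (d2 i' : ℤ) + t)) with hB
    have hccA : cc ℓ (Y 1) t = A.card := by rw [hY1]; exact cc_eq_card
    have hccB : cc ℓ (Y 2) t = B.card := by rw [hY2]; exact cc_eq_card
    have hsum : A.card + B.card = ℓ - t.natAbs := by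
      rw [← hccA, ← hccB]; exact hdiag t ht1 ht2
    have hAsub := Aset_subset (d := d1) hd1le t
    have hBsub := Aset_subset (d := d2) hd2le t
    rw [← hA] at hAsub
    rw [← hB] at hBsub
    have hAle := Finset.card_le_card hAsub
    have hBle := Finset.card_le_card hBsub
    rw [card_diag] at hAle hBle
    -- interval characterizations
    have hlo : ∀ (d' : ℕ → ℕ) i', i' < t.toNat →
        ¬ (t ≤ (i':ℤ) ∧ (i':ℤ) + 1 ≤ (d' i' : ℤ) + t) := by
      intro d' i' hi'
      rintro ⟨ha, -⟩
      omega
    have hdcA : ∀ a b, t.toNat ≤ a → a ≤ b → b < ℓ →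
        (t ≤ (b:ℤ) ∧ (b:ℤ) + 1 ≤ (d1 b : ℤ) + t) →
        (t ≤ (a:ℤ) ∧ (a:ℤ) + 1 ≤ (d1 a : ℤ) + t) := by
      intro a b hla hab hbl hPb
      have := hd1anti hab
      exact ⟨by omega, by omega⟩
    have hdcB : ∀ a b, t.toNat ≤ a → a ≤ b → b < ℓ →
        (t ≤ (b:ℤ) ∧ (b:ℤ) + 1 ≤ (d2 b : ℤ) + t) →
        (t ≤ (a:ℤ) ∧ (a:ℤ) + 1 ≤ (d2 a : ℤ) + t) := by
      intro a b hla hab hbl hPb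
      have := hd2anti hab
      exact ⟨by omega, by omega⟩
    have hiB := interval_filter (P := fun i' : ℕ => t ≤ (i':ℤ) ∧ (i':ℤ) + 1 ≤ (d2 i' : ℤ) + t)
      (hlo d2) hdcB (i := i) (by omega) hi
    have hρ : ℓ - k < ℓ := by omega
    have hiA := interval_filter (P := fun i' : ℕ => t ≤ (i':ℤ) ∧ (i':ℤ) + 1 ≤ (d1 i' : ℤ) + t)
      (hlo d1) hdcA (i := ℓ - k) (by omega) hρ
    rw [← hB] at hiB
    rw [← hA] at hiA
    have hcast : ((ℓ - k : ℕ) : ℤ) = (ℓ:ℤ) - k := by omega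
    constructor
    · intro hkd2
      -- i ∈ B
      have hiBm : i < t.toNat + B.card := hiB.mp ⟨by omega, by omega⟩
      by_contra hcon
      -- then ℓ - k ∈ A, so cards too big
      have hAm : (ℓ - k) < t.toNat + A.card := hiA.mp ⟨by omega, by omega⟩
      omega
    · intro hcon
      -- ℓ - k ∉ A
      have hAnm : ¬ ((ℓ - k) < t.toNat + A.card) := by
        intro hc
        have := hiA.mpr hc
        omega
      have hiBm : i < t.toNat + B.card := by omega
      have := hiB.mpr hiBm
      omega
  -- staircase property of d1
  have hd1s : ∀ i, i < ℓ → ℓ ≤ d1 i + i := by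
    intro i hi
    by_contra hcon
    have hk := hpt i (ℓ - i) hi (by omega) (by omega)
    rw [show ℓ - (ℓ - i) = i by omega] at hk
    have := hk.mpr (by omega)
    have := hd21 i
    omega
  -- d2 is the complement-transpose of d1
  have hd2e : ∀ i, d2 i = d2enc ℓ d1 i := by
    intro i
    by_cases hi : i < ℓ
    · have hth : ∀ k, 1 ≤ k → k ≤ ℓ → (k ≤ d2enc ℓ d1 i ↔ d1 (ℓ - k) + i < ℓ) := by
        intro k h1 h2
        rw [d2enc_threshold hd1anti h1 h2]
        omega
      have h2le := d2enc_le ℓ d1 i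
      have h2le' := hd2le i
      rcases Nat.eq_zero_or_pos (d2 i) with h0 | hpos
      · rcases Nat.eq_zero_or_pos (d2enc ℓ d1 i) with h0' | hpos'
        · omega
        · have := (hpt i (d2enc ℓ d1 i) hi hpos' h2le).mpr ((hth _ hpos' h2le).mp (le_refl _))
          omega
      · have hfwd := (hth (d2 i) hpos h2le').mpr ((hpt i (d2 i) hi hpos h2le').mp (le_refl _))
        rcases Nat.eq_zero_or_pos (d2enc ℓ d1 i) with h0' | hpos'
        · omega
        · have := (hpt i (d2enc ℓ d1 i) hi hpos' h2le).mpr ((hth _ hpos' h2le).mp (le_refl _))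
          omega
    · rw [hd2z i (by omega), d2enc_zero ℓ d1 (by omega)]
  refine ⟨d1, ⟨hd1anti, hd1le, hd1s, hd1z⟩, ?_⟩
  funext j
  by_cases hj1 : j = 1
  · subst hj1
    rw [encode_one, hY1]
  · by_cases hj2 : j = 2
    · subst hj2
      rw [encode_two, hY2]
      funext i
      simp only [yOf, hd2e i]
    · rw [hpin j (by omega)]
      simp [encode, hj1, hj2]

end Stmt15

/-- Tsuchioka's Catalan-number result, recovered by Jayne–Misra: the multiplicity of
the maximal dominant weight `2Λ_0 - γ_ℓ` of `V(2Λ_0)`, i.e. the number of pairs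
`(Y_1, Y_2) ∈ B(2Λ_0)` with the corresponding box-color counts, is the `ℓ`-th
Catalan number `C(2ℓ, ℓ)/(ℓ+1)`.
(Pairs of diagrams are encoded as functions pinned to a constant value outside
their index range `{1, 2}`.) -/
theorem stmt_15 (n ℓ : ℕ) (hn : 2 ≤ n) (hℓ1 : 1 ≤ ℓ) (hℓ2 : ℓ ≤ n / 2) :
    Set.ncard {Y : ℕ → ℕ → ℤ |
        MemB n 2 Y ∧ WeightCond n 2 ℓ Y ∧ ∀ j, j = 0 ∨ 2 < j → Y j = fun _ => 0} =
      Nat.choose (2 * ℓ) ℓ / (ℓ + 1) := by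
  have hℓn : 2*ℓ ≤ n := by omega
  have hset : {Y : ℕ → ℕ → ℤ |
        MemB n 2 Y ∧ WeightCond n 2 ℓ Y ∧ ∀ j, j = 0 ∨ 2 < j → Y j = fun _ => 0}
      = (Stmt15.encode ℓ) '' {d : ℕ → ℕ | Stmt15.InD ℓ d} := by
    ext Y
    constructor
    · intro hY
      obtain ⟨d, hd, he⟩ := Stmt15.decode hn hℓ1 hℓn hY
      exact ⟨d, hd, he⟩
    · rintro ⟨d, hd, rfl⟩
      exact Stmt15.encode_mem hn hℓ1 hℓn hd
  have hinj : Set.InjOn (Stmt15.encode ℓ) {d : ℕ → ℕ | Stmt15.InD ℓ d} := by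
    intro d hd d' hd' he
    funext i
    have h1 := congrFun (congrFun he 1) i
    rw [show Stmt15.encode ℓ d 1 i = -(d i : ℤ) from rfl,
      show Stmt15.encode ℓ d' 1 i = -(d' i : ℤ) from rfl] at h1
    omega
  rw [hset, Set.ncard_image_of_injOn hinj, Stmt15.ncard_InD]
end
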